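/- Let f ∈ L²(hℤ^d) be such that the function x ↦ x_j f(x) also belongs to L²(hℤ^d), for some j ∈ {1,…,d}. Then for every t ∈ ℝ, the function x ↦ x_j (e^{itΔ_h} f)(x) belongs to L²(hℤ^d) and, for every x ∈ hℤ^d, x_j (e^{itΔ_h} f)(x) − (e^{itΔ_h}(x_j f))(x) = −2it · (D_j (e^{itΔ_h} f))(x), where (D_j g)(x) := (g(x + h e_j) − g(x − h e_j))/(2h) is the centered difference operator (the Fourier multiplier with symbol (i/h) sin(h ξ_j)). -/

import Mathlib

open Real Finset MeasureTheory
open scoped ENNReal Classical BigOperators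

noncomputable section

namespace DNLS

/-- Index set of the finite lattice `Ω = {h·m : |m_j| ≤ K·R}`. -/
def lat (d K R : ℕ) : Finset (Fin d → ℤ) :=
  Fintype.piFinset fun _ => Finset.Icc (-(K * R : ℤ)) (K * R : ℤ)

/-- Boundary points of `Ω` (some coordinate equals `±πR`, i.e. `m_j = ±K·R`). -/
def IsBoundary (d K R : ℕ) (n : Fin d → ℤ) : Prop :=
  ∃ j : Fin d, n j = (K * R : ℤ) ∨ n j = -(K * R : ℤ)

/-- A function on the lattice (extended by zero) vanishing on the boundary and outside `Ω`. -/
def VanishingOn (d K R : ℕ) (f : (Fin d → ℤ) → ℂ) : Prop :=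
  ∀ n : Fin d → ℤ, (n ∉ lat d K R ∨ IsBoundary d K R n) → f n = 0

/-- Discrete Dirichlet Laplacian `Δ_Ω` (grid size `h`); position `x = h·n`. -/
def lapO (d K R : ℕ) (h : ℝ) (f : (Fin d → ℤ) → ℂ) (n : Fin d → ℤ) : ℂ :=
  if n ∈ lat d K R ∧ ¬IsBoundary d K R n then
    (1 / (h : ℂ) ^ 2) * ∑ j : Fin d,
      (f (Function.update n j (n j + 1)) + f (Function.update n j (n j - 1)) - 2 * f n)
  else 0

/-- Frequency index set: `ξ = m/(2R)` with `1 ≤ m_j ≤ 2KR - 1`. -/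
def freq (d K R : ℕ) : Finset (Fin d → ℤ) :=
  Fintype.piFinset fun _ => Finset.Icc (1 : ℤ) (2 * K * R - 1 : ℤ)

/-- Eigenfunction `e(x, ξ)` with `x = h·n`, `ξ = m/(2R)`. -/
def efun (d K R : ℕ) (h : ℝ) (m n : Fin d → ℤ) : ℂ :=
  (((π * (R : ℝ)) ^ (-(d : ℝ) / 2) *
      ∏ j : Fin d, Real.sin ((h * (n j : ℝ) + π * (R : ℝ)) * ((m j : ℝ) / (2 * (R : ℝ)))) : ℝ) : ℂ)

/-- Fourier symbol `P_h(ξ) = (4/h²) Σ_j sin²(h ξ_j / 2)`, `ξ = m/(2R)`. -/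
def symb (d R : ℕ) (h : ℝ) (m : Fin d → ℤ) : ℝ :=
  (4 / h ^ 2) * ∑ j : Fin d, Real.sin (h * ((m j : ℝ) / (2 * (R : ℝ))) / 2) ^ 2

/-- Inner product `⟨f, g⟩ = h^d Σ_{x∈Ω} f(x) conj(g(x))`. -/
def inn (d K R : ℕ) (h : ℝ) (f g : (Fin d → ℤ) → ℂ) : ℂ :=
  (h : ℂ) ^ d * ∑ n ∈ lat d K R, f n * (starRingEnd ℂ) (g n)

/-- Schrödinger flow `e^{itΔ_Ω} f = Σ_{ξ∈Ω*} e^{-itP_h(ξ)} ⟨f, e(·,ξ)⟩ e(·,ξ)`. -/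
def flowO (d K R : ℕ) (h t : ℝ) (f : (Fin d → ℤ) → ℂ) (n : Fin d → ℤ) : ℂ :=
  ∑ m ∈ freq d K R,
    Complex.exp (-Complex.I * (t : ℂ) * (symb d R h m : ℂ)) *
      inn d K R h f (efun d K R h m) * efun d K R h m n

/-- `L^p(Ω)` norm, `p ∈ [1,∞]`. -/
def LpO (d K R : ℕ) (h : ℝ) (p : ℝ≥0∞) (f : (Fin d → ℤ) → ℂ) : ℝ :=
  if p = ⊤ then ⨆ n ∈ lat d K R, ‖f n‖
  else (h ^ d * ∑ n ∈ lat d K R, ‖f n‖ ^ p.toReal) ^ (1 / p.toReal)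

/-- Sobolev norm `H^s(Ω)`. -/
def HsO (d K R : ℕ) (h s : ℝ) (f : (Fin d → ℤ) → ℂ) : ℝ :=
  (∑ m ∈ freq d K R,
      (1 + symb d R h m) ^ s * ‖inn d K R h f (efun d K R h m)‖ ^ 2) ^ (1 / 2 : ℝ)

/-- `N_* = 2^(⌈log₂(h/π)⌉ - 1)`. -/
def Nstar (h : ℝ) : ℝ := (2 : ℝ) ^ (⌈Real.logb 2 (h / π)⌉ - 1)

/-- `N` is dyadic with `N_* ≤ N ≤ 1`. -/
def IsDyadic (h N : ℝ) : Prop := (∃ k : ℤ, N = (2 : ℝ) ^ k) ∧ Nstar h ≤ N ∧ N ≤ 1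

/-- Projection `P_{≤N}` onto frequencies with `max_j ξ_j ≤ πN/h`. -/
def projLE (d K R : ℕ) (h N : ℝ) (f : (Fin d → ℤ) → ℂ) (n : Fin d → ℤ) : ℂ :=
  ∑ m ∈ (freq d K R).filter (fun m => ∀ j : Fin d, (m j : ℝ) / (2 * (R : ℝ)) ≤ π * N / h),
    inn d K R h f (efun d K R h m) * efun d K R h m n

/-- Littlewood–Paley projection `P_N` (with `P_{N_*} = 0`). -/
def projN (d K R : ℕ) (h N : ℝ) (f : (Fin d → ℤ) → ℂ) : (Fin d → ℤ) → ℂ :=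
  if N = Nstar h then 0
  else fun n =>
    ∑ m ∈ (freq d K R).filter (fun m =>
        (∀ j : Fin d, (m j : ℝ) / (2 * (R : ℝ)) ≤ π * N / h) ∧
        ∃ j : Fin d, π * N / (2 * h) < (m j : ℝ) / (2 * (R : ℝ))),
      inn d K R h f (efun d K R h m) * efun d K R h m n

/-- Time `L^q` norm on `[a,b]`, `q ∈ [1,∞]` (essential sup when `q = ∞`). -/
def timeLq (q : ℝ≥0∞) (a b : ℝ) (g : ℝ → ℝ) : ℝ :=
  if q = ⊤ then essSup g (volume.restrict (Set.Ioc a b))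
  else (∫ t in a..b, g t ^ q.toReal) ^ (1 / q.toReal)

/-- `‖∇_Ω f‖²_{L²(Ω)}` (forward differences, zero at the boundary). -/
def gradSqO (d K R : ℕ) (h : ℝ) (f : (Fin d → ℤ) → ℂ) : ℝ :=
  h ^ d * ∑ n ∈ lat d K R,
    if n ∈ lat d K R ∧ ¬IsBoundary d K R n then
      ∑ j : Fin d, ‖(f (Function.update n j (n j + 1)) - f n) / (h : ℂ)‖ ^ 2
    else 0

/-- Weighted norm `‖x f‖_{L²(Ω)}`. -/
def xnormO (d K R : ℕ) (h : ℝ) (f : (Fin d → ℤ) → ℂ) : ℝ :=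
  (h ^ d * ∑ n ∈ lat d K R,
      (∑ j : Fin d, (h * (n j : ℝ)) ^ 2) * ‖f n‖ ^ 2) ^ (1 / 2 : ℝ)

/-- Weighted Sobolev norm `H^{1,1}(Ω)`. -/
def H11O (d K R : ℕ) (h : ℝ) (f : (Fin d → ℤ) → ℂ) : ℝ :=
  Real.sqrt ((HsO d K R h 1 f) ^ 2 + (xnormO d K R h f) ^ 2)

/-- `w` is a (global, `C¹` in time) solution of the discrete NLS
`i ∂_t w = -Δ_Ω w + |w|² w` on the finite lattice `Ω`. -/
def IsSolutionO (d K R : ℕ) (h : ℝ) (w : ℝ → (Fin d → ℤ) → ℂ) : Prop :=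
  (∀ t : ℝ, VanishingOn d K R (w t)) ∧
  (∀ n : Fin d → ℤ, ContDiff ℝ 1 fun t : ℝ => w t n) ∧
  ∀ (t : ℝ) (n : Fin d → ℤ),
    Complex.I * deriv (fun s : ℝ => w s n) t =
      -(lapO d K R h (w t) n) + (‖w t n‖ : ℂ) ^ 2 * w t n

/-! ### The infinite lattice `hℤ^d` -/

/-- Discrete Laplacian `Δ_h` on `hℤ^d`. -/
def lapZ (d : ℕ) (h : ℝ) (f : (Fin d → ℤ) → ℂ) (n : Fin d → ℤ) : ℂ :=
  (1 / (h : ℂ) ^ 2) * ∑ j : Fin d,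
    (f (Function.update n j (n j + 1)) + f (Function.update n j (n j - 1)) - 2 * f n)

/-- Operator exponential `e^{itΔ_h} f = Σ_k (itΔ_h)^k f / k!`. -/
def flowZ (d : ℕ) (h t : ℝ) (f : (Fin d → ℤ) → ℂ) (n : Fin d → ℤ) : ℂ :=
  ∑' k : ℕ, ((Complex.I * (t : ℂ)) ^ k / (Nat.factorial k : ℂ)) * ((lapZ d h)^[k] f n)

/-- `L²(hℤ^d)` norm. -/
def L2Z (d : ℕ) (h : ℝ) (f : (Fin d → ℤ) → ℂ) : ℝ :=
  (h ^ d * ∑' n : Fin d → ℤ, ‖f n‖ ^ 2) ^ (1 / 2 : ℝ)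

/-- Membership in `L²(hℤ^d)`. -/
def MemL2Z (d : ℕ) (f : (Fin d → ℤ) → ℂ) : Prop :=
  Summable fun n : Fin d → ℤ => ‖f n‖ ^ 2

/-- `‖∇_h f‖²_{L²(hℤ^d)}` (forward differences). -/
def gradSqZ (d : ℕ) (h : ℝ) (f : (Fin d → ℤ) → ℂ) : ℝ :=
  h ^ d * ∑' n : Fin d → ℤ, ∑ j : Fin d,
    ‖(f (Function.update n j (n j + 1)) - f n) / (h : ℂ)‖ ^ 2

/-- Weighted norm `‖x f‖_{L²(hℤ^d)}`. -/
def xnormZ (d : ℕ) (h : ℝ) (f : (Fin d → ℤ) → ℂ) : ℝ :=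
  (h ^ d * ∑' n : Fin d → ℤ,
      (∑ j : Fin d, (h * (n j : ℝ)) ^ 2) * ‖f n‖ ^ 2) ^ (1 / 2 : ℝ)

/-- Weighted Sobolev norm `H^{1,1}(hℤ^d)`. -/
def H11Z (d : ℕ) (h : ℝ) (f : (Fin d → ℤ) → ℂ) : ℝ :=
  Real.sqrt ((L2Z d h f) ^ 2 + gradSqZ d h f + (xnormZ d h f) ^ 2)

/-- Membership in `H^{1,1}(hℤ^d)` (all defining sums converge). -/
def MemH11Z (d : ℕ) (h : ℝ) (f : (Fin d → ℤ) → ℂ) : Prop :=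
  (Summable fun n : Fin d → ℤ => ‖f n‖ ^ 2) ∧
  (Summable fun n : Fin d → ℤ => ∑ j : Fin d,
      ‖(f (Function.update n j (n j + 1)) - f n) / (h : ℂ)‖ ^ 2) ∧
  (Summable fun n : Fin d → ℤ =>
      (∑ j : Fin d, (h * (n j : ℝ)) ^ 2) * ‖f n‖ ^ 2)

/-- `v` is a (global, `C¹` in time, `L²`-valued) solution of the discrete NLS
`i ∂_t v = -Δ_h v + |v|² v` on `hℤ^d`. -/
def IsSolutionZ (d : ℕ) (h : ℝ) (v : ℝ → (Fin d → ℤ) → ℂ) : Prop :=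
  (∀ t : ℝ, MemL2Z d (v t)) ∧
  (∀ n : Fin d → ℤ, ContDiff ℝ 1 fun t : ℝ => v t n) ∧
  ∀ (t : ℝ) (n : Fin d → ℤ),
    Complex.I * deriv (fun s : ℝ => v s n) t =
      -(lapZ d h (v t) n) + (‖v t n‖ : ℂ) ^ 2 * v t n



variable {d : ℕ}

/-- shift of a lattice point -/
def upd (j : Fin d) (c : ℤ) (n : Fin d → ℤ) : Fin d → ℤ := Function.update n j (n j + c)

lemma upd_comm (i j : Fin d) (a c : ℤ) (n : Fin d → ℤ) :
    upd i a (upd j c n) = upd j c (upd i a n) := by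
  rcases eq_or_ne i j with rfl | hij
  · unfold upd
    simp only [Function.update_self, Function.update_idem]
    ring_nf
  · unfold upd
    rw [Function.update_of_ne hij, Function.update_of_ne hij.symm]
    exact (Function.update_comm hij _ _ n).symm

lemma upd_neg_one (i : Fin d) (n : Fin d → ℤ) :
    Function.update n i (n i - 1) = upd i (-1) n := rfl

lemma upd_one (i : Fin d) (n : Fin d → ℤ) :
    Function.update n i (n i + 1) = upd i 1 n := rfl

lemma lapZ_eq (h : ℝ) (f : (Fin d → ℤ) → ℂ) (n : Fin d → ℤ) :
    lapZ d h f n = (1 / (h : ℂ) ^ 2) * ∑ i : Fin d,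
      (f (upd i 1 n) + f (upd i (-1) n) - 2 * f n) := by
  rfl

lemma lapZ_upd (h : ℝ) (f : (Fin d → ℤ) → ℂ) (j : Fin d) (c : ℤ) (n : Fin d → ℤ) :
    lapZ d h (fun m => f (upd j c m)) n = lapZ d h f (upd j c n) := by
  rw [lapZ_eq, lapZ_eq]
  congr 1
  refine Finset.sum_congr rfl fun i _ => ?_
  rw [upd_comm i j 1 c, upd_comm i j (-1) c]

lemma lapZ_iter_upd (h : ℝ) (f : (Fin d → ℤ) → ℂ) (j : Fin d) (c : ℤ) (k : ℕ) :
    (lapZ d h)^[k] (fun m => f (upd j c m)) = fun n => (lapZ d h)^[k] f (upd j c n) := by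
  induction k with
  | zero => rfl
  | succ k ih =>
    rw [Function.iterate_succ_apply', Function.iterate_succ_apply', ih]
    funext n
    exact lapZ_upd h _ j c n

lemma lapZ_add (h : ℝ) (f g : (Fin d → ℤ) → ℂ) (n : Fin d → ℤ) :
    lapZ d h (fun m => f m + g m) n = lapZ d h f n + lapZ d h g n := by
  unfold lapZ
  rw [← mul_add, ← Finset.sum_add_distrib]
  congr 1
  refine Finset.sum_congr rfl fun i _ => ?_
  ring

lemma lapZ_smul (h : ℝ) (c : ℂ) (f : (Fin d → ℤ) → ℂ) (n : Fin d → ℤ) :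
    lapZ d h (fun m => c * f m) n = c * lapZ d h f n := by
  unfold lapZ
  rw [Finset.mul_sum, Finset.mul_sum]
  rw [mul_left_comm]
  congr 1
  rw [Finset.mul_sum]
  refine Finset.sum_congr rfl fun i _ => ?_
  ring

lemma lapZ_sub (h : ℝ) (f g : (Fin d → ℤ) → ℂ) (n : Fin d → ℤ) :
    lapZ d h (fun m => f m - g m) n = lapZ d h f n - lapZ d h g n := by
  unfold lapZ
  rw [← mul_sub, ← Finset.sum_sub_distrib]
  congr 1
  refine Finset.sum_congr rfl fun i _ => ?_
  ring

lemma lapZ_iter_sub (h : ℝ) (f g : (Fin d → ℤ) → ℂ) (k : ℕ) :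
    (lapZ d h)^[k] (fun m => f m - g m) = fun n => (lapZ d h)^[k] f n - (lapZ d h)^[k] g n := by
  induction k with
  | zero => rfl
  | succ k ih =>
    rw [Function.iterate_succ_apply', Function.iterate_succ_apply', ih]
    funext n
    rw [lapZ_sub, Function.iterate_succ_apply']


/-- the multiplication weight -/
def XW (h : ℝ) (j : Fin d) (n : Fin d → ℤ) : ℂ := ((h * (n j : ℝ) : ℝ) : ℂ)

lemma XW_upd_one (h : ℝ) (j i : Fin d) (n : Fin d → ℤ) :
    XW h j (upd i 1 n) = XW h j n + (if i = j then (h : ℂ) else 0) := by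
  unfold XW upd
  rcases eq_or_ne i j with rfl | hij
  · simp only [Function.update_self, if_pos rfl]
    push_cast
    ring
  · rw [Function.update_of_ne (Ne.symm hij), if_neg hij, add_zero]

lemma XW_upd_neg (h : ℝ) (j i : Fin d) (n : Fin d → ℤ) :
    XW h j (upd i (-1) n) = XW h j n - (if i = j then (h : ℂ) else 0) := by
  unfold XW upd
  rcases eq_or_ne i j with rfl | hij
  · simp only [Function.update_self, if_pos rfl]
    push_cast
    ring
  · rw [Function.update_of_ne (Ne.symm hij), if_neg hij, sub_zero]

lemma lapZ_mulX (h : ℝ) (hh : (h : ℂ) ≠ 0) (f : (Fin d → ℤ) → ℂ) (j : Fin d) (n : Fin d → ℤ) :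
    lapZ d h (fun m => XW h j m * f m) n
      = XW h j n * lapZ d h f n + (1 / (h : ℂ)) * (f (upd j 1 n) - f (upd j (-1) n)) := by
  rw [lapZ_eq, lapZ_eq]
  have key : ∀ i : Fin d,
      XW h j (upd i 1 n) * f (upd i 1 n) + XW h j (upd i (-1) n) * f (upd i (-1) n)
        - 2 * (XW h j n * f n)
      = XW h j n * (f (upd i 1 n) + f (upd i (-1) n) - 2 * f n)
        + (if i = j then (h : ℂ) * (f (upd i 1 n) - f (upd i (-1) n)) else 0) := by
    intro i
    rw [XW_upd_one, XW_upd_neg]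
    rcases eq_or_ne i j with rfl | hij
    · simp only [if_pos rfl, if_true, eq_self_iff_true]
      ring
    · simp only [if_neg hij]
      ring
  calc (1 / (h : ℂ) ^ 2) * ∑ i : Fin d,
        (XW h j (upd i 1 n) * f (upd i 1 n) + XW h j (upd i (-1) n) * f (upd i (-1) n)
          - 2 * (XW h j n * f n))
      = (1 / (h : ℂ) ^ 2) * ∑ i : Fin d,
        (XW h j n * (f (upd i 1 n) + f (upd i (-1) n) - 2 * f n)
          + (if i = j then (h : ℂ) * (f (upd i 1 n) - f (upd i (-1) n)) else 0)) := by
        rw [Finset.sum_congr rfl fun i _ => key i]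
    _ = (1 / (h : ℂ) ^ 2) * ((XW h j n * ∑ i : Fin d, (f (upd i 1 n) + f (upd i (-1) n) - 2 * f n))
          + (h : ℂ) * (f (upd j 1 n) - f (upd j (-1) n))) := by
        rw [Finset.sum_add_distrib, Finset.sum_ite_eq' Finset.univ j
          (fun i => (h : ℂ) * (f (upd i 1 n) - f (upd i (-1) n))), if_pos (Finset.mem_univ j),
          ← Finset.mul_sum]
    _ = XW h j n * ((1 / (h : ℂ) ^ 2) * ∑ i : Fin d, (f (upd i 1 n) + f (upd i (-1) n) - 2 * f n))
          + (1 / (h : ℂ)) * (f (upd j 1 n) - f (upd j (-1) n)) := by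
        field_simp

lemma lapZ_iter_mulX (h : ℝ) (hh : (h : ℂ) ≠ 0) (f : (Fin d → ℤ) → ℂ) (j : Fin d) (k : ℕ) :
    ∀ n, (lapZ d h)^[k + 1] (fun m => XW h j m * f m) n
      = XW h j n * (lapZ d h)^[k + 1] f n
        + (((k : ℂ) + 1) / (h : ℂ)) *
          (lapZ d h)^[k] (fun m => f (upd j 1 m) - f (upd j (-1) m)) n := by
  induction k with
  | zero =>
    intro n
    simp only [Nat.cast_zero, zero_add, Function.iterate_one, Function.iterate_zero, id_eq]
    rw [lapZ_mulX h hh f j n]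
  | succ k ih =>
    intro n
    rw [Function.iterate_succ_apply' (lapZ d h) (k + 1)]
    have hfe : (lapZ d h)^[k + 1] (fun m => XW h j m * f m)
        = fun m => XW h j m * (lapZ d h)^[k + 1] f m
          + (((k : ℂ) + 1) / (h : ℂ)) *
            (lapZ d h)^[k] (fun m' => f (upd j 1 m') - f (upd j (-1) m')) m := funext ih
    rw [hfe, lapZ_add, lapZ_smul, lapZ_mulX h hh _ j n,
      Function.iterate_succ_apply' (lapZ d h) (k + 1) f,
      ← Function.iterate_succ_apply' (lapZ d h) k]
    have hS : (lapZ d h)^[k + 1] f (upd j 1 n) - (lapZ d h)^[k + 1] f (upd j (-1) n)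
        = (lapZ d h)^[k + 1] (fun m => f (upd j 1 m) - f (upd j (-1) m)) n := by
      rw [lapZ_iter_sub]
      have h1 := congrFun (lapZ_iter_upd h f j 1 (k + 1)) n
      have h2 := congrFun (lapZ_iter_upd h f j (-1) (k + 1)) n
      rw [← h1, ← h2]
    rw [hS]
    push_cast
    ring



lemma bounded_of_sq_summable {f : (Fin d → ℤ) → ℂ}
    (hf : Summable fun n : Fin d → ℤ => ‖f n‖ ^ 2) (n : Fin d → ℤ) :
    ‖f n‖ ≤ Real.sqrt (∑' m : Fin d → ℤ, ‖f m‖ ^ 2) := by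
  have h1 : ‖f n‖ ^ 2 ≤ ∑' m : Fin d → ℤ, ‖f m‖ ^ 2 :=
    hf.le_tsum n fun m _ => sq_nonneg _
  have := Real.sqrt_le_sqrt h1
  rwa [Real.sqrt_sq (norm_nonneg _)] at this

lemma abs_lapZ_le (h : ℝ) (hh0 : 0 < h) {f : (Fin d → ℤ) → ℂ} {B : ℝ}
    (hB : ∀ n, ‖f n‖ ≤ B) (n : Fin d → ℤ) :
    ‖lapZ d h f n‖ ≤ (4 * d / h ^ 2) * B := by
  have hB0 : 0 ≤ B := le_trans (norm_nonneg _) (hB n)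
  rw [lapZ_eq, norm_mul]
  have h1 : ‖1 / (h : ℂ) ^ 2‖ = 1 / h ^ 2 := by
    rw [norm_div, norm_one, norm_pow, Complex.norm_real, Real.norm_eq_abs, abs_of_pos hh0]
  rw [h1]
  have h2 : ‖∑ i : Fin d, (f (upd i 1 n) + f (upd i (-1) n) - 2 * f n)‖
      ≤ ∑ i : Fin d, (4 * B) := by
    refine le_trans (norm_sum_le _ _) (Finset.sum_le_sum fun i _ => ?_)
    calc ‖f (upd i 1 n) + f (upd i (-1) n) - 2 * f n‖
        ≤ ‖f (upd i 1 n) + f (upd i (-1) n)‖ + ‖2 * f n‖ :=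
          norm_sub_le _ _
      _ ≤ ‖f (upd i 1 n)‖ + ‖f (upd i (-1) n)‖ + 2 * ‖f n‖ := by
          rw [norm_mul]
          simp only [Complex.norm_two]
          exact add_le_add (norm_add_le _ _) le_rfl
      _ ≤ B + B + 2 * B := by
          have := hB (upd i 1 n); have := hB (upd i (-1) n); have := hB n
          gcongr <;> assumption
      _ = 4 * B := by ring
  rw [Finset.sum_const, Finset.card_univ, Fintype.card_fin, nsmul_eq_mul] at h2
  calc 1 / h ^ 2 * ‖∑ i : Fin d, (f (upd i 1 n) + f (upd i (-1) n) - 2 * f n)‖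
      ≤ 1 / h ^ 2 * ((d : ℝ) * (4 * B)) := by
        have : (0:ℝ) < h ^ 2 := pow_pos hh0 2
        gcongr
    _ = (4 * d / h ^ 2) * B := by field_simp

lemma abs_lapZ_iter_le (h : ℝ) (hh0 : 0 < h) {f : (Fin d → ℤ) → ℂ} {B : ℝ}
    (hB : ∀ n, ‖f n‖ ≤ B) (k : ℕ) (n : Fin d → ℤ) :
    ‖(lapZ d h)^[k] f n‖ ≤ (4 * d / h ^ 2) ^ k * B := by
  induction k generalizing n with
  | zero => simpa using hB n
  | succ k ih =>
    rw [Function.iterate_succ_apply']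
    calc ‖lapZ d h ((lapZ d h)^[k] f) n‖
        ≤ (4 * d / h ^ 2) * ((4 * d / h ^ 2) ^ k * B) := abs_lapZ_le h hh0 ih n
      _ = (4 * d / h ^ 2) ^ (k + 1) * B := by ring

lemma summable_flow_terms (h : ℝ) (hh0 : 0 < h) (t : ℝ) {f : (Fin d → ℤ) → ℂ} {B : ℝ}
    (hB : ∀ n, ‖f n‖ ≤ B) (n : Fin d → ℤ) :
    Summable fun k : ℕ =>
      ((Complex.I * (t : ℂ)) ^ k / (Nat.factorial k : ℂ)) * ((lapZ d h)^[k] f n) := by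
  have hB0 : 0 ≤ B := le_trans (norm_nonneg _) (hB n)
  apply Summable.of_norm
  have hmaj : Summable fun k : ℕ => (|t| * (4 * d / h ^ 2)) ^ k / (Nat.factorial k) * B :=
    (Real.summable_pow_div_factorial _).mul_right B
  refine Summable.of_nonneg_of_le (fun k => norm_nonneg _) (fun k => ?_) hmaj
  rw [norm_mul, norm_div]
  have h1 : ‖(Complex.I * (t : ℂ)) ^ k‖ = |t| ^ k := by
    rw [norm_pow, norm_mul, Complex.norm_I, one_mul, Complex.norm_real, Real.norm_eq_abs]
  have h2 : ‖((Nat.factorial k : ℕ) : ℂ)‖ = (Nat.factorial k : ℝ) := by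
    rw [Complex.norm_natCast]
  rw [h1, h2]
  have h3 : ‖(lapZ d h)^[k] f n‖ ≤ (4 * d / h ^ 2) ^ k * B := abs_lapZ_iter_le h hh0 hB k n
  have hfac : (0:ℝ) < (Nat.factorial k : ℝ) := by positivity
  calc |t| ^ k / (Nat.factorial k : ℝ) * ‖(lapZ d h)^[k] f n‖
      ≤ |t| ^ k / (Nat.factorial k : ℝ) * ((4 * d / h ^ 2) ^ k * B) := by
        have : (0:ℝ) ≤ |t| ^ k / (Nat.factorial k : ℝ) := by positivity
        exact mul_le_mul_of_nonneg_left h3 this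
    _ = (|t| * (4 * d / h ^ 2)) ^ k / (Nat.factorial k) * B := by
        rw [mul_pow]
        have hd0 : (0:ℝ) ≤ 4 * d / h ^ 2 := by positivity
        field_simp


lemma flow_comm (h : ℝ) (hh0 : 0 < h) (t : ℝ) (j : Fin d) {f : (Fin d → ℤ) → ℂ}
    (hfs : Summable fun n : Fin d → ℤ => ‖f n‖ ^ 2)
    (hxfs : Summable fun n : Fin d → ℤ => ‖XW h j n * f n‖ ^ 2)
    (n : Fin d → ℤ) :
    flowZ d h t (fun m => XW h j m * f m) n
      = XW h j n * flowZ d h t f n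
        + (Complex.I * (t : ℂ) / (h : ℂ)) *
          (flowZ d h t f (upd j 1 n) - flowZ d h t f (upd j (-1) n)) := by
  have hh : (h : ℂ) ≠ 0 := by
    simp only [ne_eq, Complex.ofReal_eq_zero]; exact hh0.ne'
  set c : ℕ → ℂ := fun k => (Complex.I * (t : ℂ)) ^ k / (Nat.factorial k : ℂ) with hc
  set Bf := Real.sqrt (∑' m : Fin d → ℤ, ‖f m‖ ^ 2) with hBf
  have hfB : ∀ m, ‖f m‖ ≤ Bf := bounded_of_sq_summable hfs
  have hxfB : ∀ m, ‖XW h j m * f m‖ ≤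
      Real.sqrt (∑' m : Fin d → ℤ, ‖XW h j m * f m‖ ^ 2) :=
    bounded_of_sq_summable hxfs
  set Sf : (Fin d → ℤ) → ℂ := fun m => f (upd j 1 m) - f (upd j (-1) m) with hSf
  have hSfB : ∀ m, ‖Sf m‖ ≤ Bf + Bf := fun m =>
    le_trans (norm_sub_le _ _) (add_le_add (hfB _) (hfB _))
  -- summability of all the relevant series
  have S1 : Summable fun k : ℕ => c k * ((lapZ d h)^[k] (fun m => XW h j m * f m) n) :=
    summable_flow_terms h hh0 t hxfB n
  have S2 : Summable fun k : ℕ => XW h j n * (c k * ((lapZ d h)^[k] f n)) :=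
    (summable_flow_terms h hh0 t hfB n).mul_left _
  have S3 : Summable fun k : ℕ => c k * ((lapZ d h)^[k] Sf n) :=
    summable_flow_terms h hh0 t hSfB n
  have Sup : Summable fun k : ℕ => c k * ((lapZ d h)^[k] f (upd j 1 n)) :=
    summable_flow_terms h hh0 t hfB _
  have Sdn : Summable fun k : ℕ => c k * ((lapZ d h)^[k] f (upd j (-1) n)) :=
    summable_flow_terms h hh0 t hfB _
  -- flowZ Sf n = flow up - flow dn
  have hflowS : flowZ d h t Sf n = flowZ d h t f (upd j 1 n) - flowZ d h t f (upd j (-1) n) := by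
    unfold flowZ
    rw [← Sup.tsum_sub Sdn]
    refine tsum_congr fun k => ?_
    have : (lapZ d h)^[k] Sf n
        = (lapZ d h)^[k] f (upd j 1 n) - (lapZ d h)^[k] f (upd j (-1) n) := by
      have h0 : (lapZ d h)^[k] Sf n =
          (lapZ d h)^[k] (fun m => f (upd j 1 m)) n - (lapZ d h)^[k] (fun m => f (upd j (-1) m)) n :=
        congrFun (lapZ_iter_sub h _ _ k) n
      rw [h0, congrFun (lapZ_iter_upd h f j 1 k) n, congrFun (lapZ_iter_upd h f j (-1) k) n]
    rw [this]
    ring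
  -- the difference series
  set g : ℕ → ℂ := fun k => c k * ((lapZ d h)^[k] (fun m => XW h j m * f m) n)
      - XW h j n * (c k * ((lapZ d h)^[k] f n)) with hg
  have Sg : Summable g := S1.sub S2
  have hdiff : flowZ d h t (fun m => XW h j m * f m) n - XW h j n * flowZ d h t f n
      = ∑' k, g k := by
    unfold flowZ
    rw [← tsum_mul_left, ← S1.tsum_sub S2]
  have hg0 : g 0 = 0 := by
    simp only [hg, hc, pow_zero, Nat.factorial_zero, Nat.cast_one, div_one, one_mul,
      Function.iterate_zero, id_eq]
    ring
  have hgsucc : ∀ k : ℕ, g (k + 1)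
      = (Complex.I * (t : ℂ) / (h : ℂ)) * (c k * ((lapZ d h)^[k] Sf n)) := by
    intro k
    have hiter := lapZ_iter_mulX h hh f j k n
    simp only [hg]
    rw [hiter]
    have hcoef : c (k + 1) * (((k : ℂ) + 1) / (h : ℂ))
        = (Complex.I * (t : ℂ) / (h : ℂ)) * c k := by
      simp only [hc, Nat.factorial_succ, pow_succ]
      push_cast
      have hk1 : ((k : ℂ) + 1) ≠ 0 := by
        have := Nat.cast_add_one_ne_zero (R := ℂ) k
        exact_mod_cast this
      have hkf : ((Nat.factorial k : ℕ) : ℂ) ≠ 0 := by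
        exact_mod_cast Nat.cast_ne_zero.mpr (Nat.factorial_ne_zero k)
      field_simp
    calc c (k + 1) * (XW h j n * (lapZ d h)^[k + 1] f n
            + ((k : ℂ) + 1) / (h : ℂ) * (lapZ d h)^[k] Sf n)
          - XW h j n * (c (k + 1) * (lapZ d h)^[k + 1] f n)
        = (c (k + 1) * (((k : ℂ) + 1) / (h : ℂ))) * (lapZ d h)^[k] Sf n := by ring
      _ = (Complex.I * (t : ℂ) / (h : ℂ)) * (c k * ((lapZ d h)^[k] Sf n)) := by
          rw [hcoef]; ring
  have htail : ∑' k, g k = (Complex.I * (t : ℂ) / (h : ℂ)) * flowZ d h t Sf n := by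
    rw [Sg.tsum_eq_zero_add, hg0, zero_add]
    calc ∑' k : ℕ, g (k + 1)
        = ∑' k : ℕ, (Complex.I * (t : ℂ) / (h : ℂ)) * (c k * ((lapZ d h)^[k] Sf n)) :=
          tsum_congr hgsucc
      _ = (Complex.I * (t : ℂ) / (h : ℂ)) * ∑' k : ℕ, c k * ((lapZ d h)^[k] Sf n) :=
          tsum_mul_left
      _ = (Complex.I * (t : ℂ) / (h : ℂ)) * flowZ d h t Sf n := rfl
  have heq := hdiff.trans (htail.trans (by rw [hflowS]))
  linear_combination heq


abbrev lpE (d : ℕ) := lp (fun _ : (Fin d → ℤ) => ℂ) 2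

lemma two_toReal : (2 : ℝ≥0∞).toReal = 2 := by norm_num

lemma memℓp_two_iff (g : (Fin d → ℤ) → ℂ) :
    Memℓp g 2 ↔ Summable fun n : Fin d → ℤ => ‖g n‖ ^ 2 := by
  rw [memℓp_gen_iff (by norm_num : (0:ℝ) < (2 : ℝ≥0∞).toReal)]
  have : (fun n : Fin d → ℤ => ‖g n‖ ^ (2 : ℝ≥0∞).toReal)
      = fun n : Fin d → ℤ => ‖g n‖ ^ 2 := by
    funext n
    rw [two_toReal, show (2:ℝ) = ((2:ℕ):ℝ) by norm_num, Real.rpow_natCast]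
  rw [this]

def updEquiv (j : Fin d) (c : ℤ) : (Fin d → ℤ) ≃ (Fin d → ℤ) where
  toFun n := upd j c n
  invFun n := upd j (-c) n
  left_inv n := by
    show Function.update (Function.update n j (n j + c)) j
      (Function.update n j (n j + c) j + -c) = n
    rw [Function.update_self, Function.update_idem, add_neg_cancel_right,
      Function.update_eq_self]
  right_inv n := by
    show Function.update (Function.update n j (n j + -c)) j
      (Function.update n j (n j + -c) j + c) = n
    rw [Function.update_self, Function.update_idem, neg_add_cancel_right,
      Function.update_eq_self]

lemma memℓp_upd {u : (Fin d → ℤ) → ℂ} (hu : Memℓp u 2) (j : Fin d) (c : ℤ) :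
    Memℓp (fun n => u (upd j c n)) 2 := by
  rw [memℓp_two_iff] at hu ⊢
  exact ((updEquiv j c).summable_iff
    (f := fun n : Fin d → ℤ => ‖u n‖ ^ 2)).mpr hu

def shiftE (j : Fin d) (c : ℤ) (u : lpE d) : lpE d :=
  ⟨fun n => u (upd j c n), memℓp_upd (lp.memℓp u) j c⟩

lemma shiftE_apply (j : Fin d) (c : ℤ) (u : lpE d) (n : Fin d → ℤ) :
    (shiftE j c u) n = u (upd j c n) := rfl

lemma norm_shiftE (j : Fin d) (c : ℤ) (u : lpE d) : ‖shiftE j c u‖ = ‖u‖ := by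
  have h2 : (0:ℝ) < (2 : ℝ≥0∞).toReal := by norm_num
  rw [lp.norm_eq_tsum_rpow h2, lp.norm_eq_tsum_rpow h2]
  congr 1
  exact (updEquiv j c).tsum_eq (fun n : Fin d → ℤ => ‖u n‖ ^ (2 : ℝ≥0∞).toReal)

def lapE (h : ℝ) (u : lpE d) : lpE d :=
  (1 / (h:ℂ)^2) • ((∑ i : Fin d, (shiftE i 1 u + shiftE i (-1) u)) - ((2 * d : ℕ) : ℂ) • u)

lemma lapE_coe (h : ℝ) (u : lpE d) (n : Fin d → ℤ) :
    lapE h u n = lapZ d h (↑u) n := by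
  rw [lapZ_eq]
  unfold lapE
  rw [lp.coeFn_smul, Pi.smul_apply, smul_eq_mul]
  congr 1
  rw [lp.coeFn_sub, Pi.sub_apply, lp.coeFn_smul, Pi.smul_apply, smul_eq_mul,
    lp.coeFn_sum, Finset.sum_apply]
  have hterm : ∀ i : Fin d, (⇑(shiftE i 1 u + shiftE i (-1) u)) n
      = u (upd i 1 n) + u (upd i (-1) n) := by
    intro i
    rw [lp.coeFn_add, Pi.add_apply, shiftE_apply, shiftE_apply]
  rw [Finset.sum_congr rfl fun i _ => hterm i]
  rw [Finset.sum_sub_distrib, Finset.sum_const, Finset.card_univ, Fintype.card_fin,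
    nsmul_eq_mul]
  push_cast
  ring

lemma norm_lapE_le (h : ℝ) (hh0 : 0 < h) (u : lpE d) :
    ‖lapE h u‖ ≤ (4 * d / h ^ 2) * ‖u‖ := by
  unfold lapE
  rw [norm_smul]
  have h1 : ‖(1 / (h:ℂ)^2 : ℂ)‖ = 1 / h ^ 2 := by
    rw [norm_div, norm_one, norm_pow, Complex.norm_real, Real.norm_eq_abs, abs_of_pos hh0]
  rw [h1]
  have h2 : ‖(∑ i : Fin d, (shiftE i 1 u + shiftE i (-1) u)) - ((2 * d : ℕ) : ℂ) • u‖
      ≤ 2 * d * ‖u‖ + 2 * d * ‖u‖ := by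
    refine le_trans (norm_sub_le _ _) (add_le_add ?_ ?_)
    · refine le_trans (norm_sum_le _ _) ?_
      have : ∀ i : Fin d, ‖shiftE i 1 u + shiftE i (-1) u‖ ≤ 2 * ‖u‖ := fun i =>
        le_trans (norm_add_le _ _) (by rw [norm_shiftE, norm_shiftE]; ring_nf; exact le_rfl)
      refine le_trans (Finset.sum_le_sum fun i _ => this i) ?_
      rw [Finset.sum_const, Finset.card_univ, Fintype.card_fin, nsmul_eq_mul]
      ring_nf
      exact le_rfl
    · rw [norm_smul, Complex.norm_natCast]
      push_cast
      ring_nf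
      exact le_rfl
  calc 1 / h ^ 2 * ‖(∑ i : Fin d, (shiftE i 1 u + shiftE i (-1) u)) - ((2 * d : ℕ) : ℂ) • u‖
      ≤ 1 / h ^ 2 * (2 * d * ‖u‖ + 2 * d * ‖u‖) := by
        have : (0:ℝ) < h ^ 2 := pow_pos hh0 2
        gcongr
    _ = (4 * d / h ^ 2) * ‖u‖ := by field_simp; ring

lemma lapE_iter_coe (h : ℝ) (u : lpE d) (k : ℕ) (n : Fin d → ℤ) :
    ((lapE h)^[k] u) n = (lapZ d h)^[k] (↑u) n := by
  induction k generalizing n with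
  | zero => rfl
  | succ k ih =>
    rw [Function.iterate_succ_apply', Function.iterate_succ_apply', lapE_coe]
    have : (↑((lapE h)^[k] u) : (Fin d → ℤ) → ℂ) = (lapZ d h)^[k] ↑u := funext ih
    rw [this]

lemma norm_lapE_iter_le (h : ℝ) (hh0 : 0 < h) (u : lpE d) (k : ℕ) :
    ‖(lapE h)^[k] u‖ ≤ (4 * d / h ^ 2) ^ k * ‖u‖ := by
  induction k with
  | zero => simp
  | succ k ih =>
    rw [Function.iterate_succ_apply']
    calc ‖lapE h ((lapE h)^[k] u)‖ ≤ (4 * d / h ^ 2) * ‖(lapE h)^[k] u‖ :=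
          norm_lapE_le h hh0 _
      _ ≤ (4 * d / h ^ 2) * ((4 * d / h ^ 2) ^ k * ‖u‖) := by
          have : (0:ℝ) ≤ 4 * d / h ^ 2 := by positivity
          exact mul_le_mul_of_nonneg_left ih this
      _ = (4 * d / h ^ 2) ^ (k + 1) * ‖u‖ := by ring

def evalCLM (n : Fin d → ℤ) : lpE d →L[ℂ] ℂ :=
  LinearMap.mkContinuous
    { toFun := fun u : lpE d => u n
      map_add' := fun u v => by
        show (↑(u + v) : (Fin d → ℤ) → ℂ) n = _
        rw [lp.coeFn_add]; rfl
      map_smul' := fun c u => by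
        show (↑(c • u) : (Fin d → ℤ) → ℂ) n = _
        rw [lp.coeFn_smul]; rfl }
    1 (fun u => by
      simpa using lp.norm_apply_le_norm (by norm_num : (2 : ℝ≥0∞) ≠ 0) u n)

lemma evalCLM_apply (n : Fin d → ℤ) (u : lpE d) : evalCLM n u = u n := rfl

lemma flow_memℓp (h : ℝ) (hh0 : 0 < h) (t : ℝ) {g : (Fin d → ℤ) → ℂ}
    (hg : Summable fun n : Fin d → ℤ => ‖g n‖ ^ 2) :
    Memℓp (flowZ d h t g) 2 := by
  set gE : lpE d := ⟨g, (memℓp_two_iff g).mpr hg⟩ with hgE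
  have hsum : Summable fun k : ℕ =>
      ((Complex.I * (t:ℂ)) ^ k / (Nat.factorial k : ℂ)) • (lapE h)^[k] gE := by
    apply Summable.of_norm
    have hmaj : Summable fun k : ℕ => (|t| * (4 * d / h ^ 2)) ^ k / (Nat.factorial k) * ‖gE‖ :=
      (Real.summable_pow_div_factorial _).mul_right _
    refine Summable.of_nonneg_of_le (fun k => norm_nonneg _) (fun k => ?_) hmaj
    rw [norm_smul, norm_div]
    have h1 : ‖(Complex.I * (t : ℂ)) ^ k‖ = |t| ^ k := by
      rw [norm_pow, norm_mul, Complex.norm_I, one_mul, Complex.norm_real, Real.norm_eq_abs]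
    rw [h1, Complex.norm_natCast]
    have hfac : (0:ℝ) < (Nat.factorial k : ℝ) := by positivity
    calc |t| ^ k / (Nat.factorial k : ℝ) * ‖(lapE h)^[k] gE‖
        ≤ |t| ^ k / (Nat.factorial k : ℝ) * ((4 * d / h ^ 2) ^ k * ‖gE‖) := by
          have : (0:ℝ) ≤ |t| ^ k / (Nat.factorial k : ℝ) := by positivity
          exact mul_le_mul_of_nonneg_left (norm_lapE_iter_le h hh0 gE k) this
      _ = (|t| * (4 * d / h ^ 2)) ^ k / (Nat.factorial k) * ‖gE‖ := by
          rw [mul_pow]; field_simp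
  set F : lpE d := ∑' k : ℕ, ((Complex.I * (t:ℂ)) ^ k / (Nat.factorial k : ℂ)) • (lapE h)^[k] gE
    with hF
  have hFn : ∀ n : Fin d → ℤ, F n = flowZ d h t g n := by
    intro n
    have h1 : evalCLM n F
        = ∑' k : ℕ, evalCLM n (((Complex.I * (t:ℂ)) ^ k / (Nat.factorial k : ℂ)) •
            (lapE h)^[k] gE) := (evalCLM n).map_tsum hsum
    rw [evalCLM_apply] at h1
    rw [h1]
    refine tsum_congr fun k => ?_
    rw [(evalCLM n).map_smul, evalCLM_apply, smul_eq_mul, lapE_iter_coe]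
  have : (↑F : (Fin d → ℤ) → ℂ) = flowZ d h t g := funext hFn
  exact this ▸ lp.memℓp F


/-- commutator identity on `hℤ^d`:
`x_j e^{itΔ_h} f - e^{itΔ_h}(x_j f) = -2it · D_j(e^{itΔ_h} f)` with `D_j` the centered
difference, and `x_j e^{itΔ_h} f ∈ L²(hℤ^d)` whenever `f, x_j f ∈ L²(hℤ^d)`. -/
theorem stmt15 (d : ℕ) (hd : 1 ≤ d) (h : ℝ) (hh0 : 0 < h) (hh1 : h ≤ 1)
    (j : Fin d) (f : (Fin d → ℤ) → ℂ)
    (hf : Summable fun n : Fin d → ℤ => ‖f n‖ ^ 2)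
    (hxf : Summable fun n : Fin d → ℤ =>
      ‖((h * (n j : ℝ) : ℝ) : ℂ) * f n‖ ^ 2) (t : ℝ) :
    (Summable fun n : Fin d → ℤ =>
      ‖((h * (n j : ℝ) : ℝ) : ℂ) * flowZ d h t f n‖ ^ 2) ∧
    ∀ n : Fin d → ℤ,
      ((h * (n j : ℝ) : ℝ) : ℂ) * flowZ d h t f n
          - flowZ d h t (fun n' => ((h * (n' j : ℝ) : ℝ) : ℂ) * f n') n
        = (-2 : ℂ) * Complex.I * (t : ℂ) *
            ((flowZ d h t f (Function.update n j (n j + 1))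
              - flowZ d h t f (Function.update n j (n j - 1))) / (2 * (h : ℂ))) := by
  have hh : (h : ℂ) ≠ 0 := by
    simp only [ne_eq, Complex.ofReal_eq_zero]; exact hh0.ne'
  have hxf' : Summable fun n : Fin d → ℤ => ‖XW h j n * f n‖ ^ 2 := hxf
  constructor
  · -- summability of the weighted flow
    have M1 : Memℓp (flowZ d h t (fun m => XW h j m * f m)) 2 := flow_memℓp h hh0 t hxf'
    have Mf : Memℓp (flowZ d h t f) 2 := flow_memℓp h hh0 t hf
    have Mup : Memℓp (fun n : Fin d → ℤ => flowZ d h t f (upd j 1 n)) 2 := memℓp_upd Mf j 1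
    have Mdn : Memℓp (fun n : Fin d → ℤ => flowZ d h t f (upd j (-1) n)) 2 := memℓp_upd Mf j (-1)
    have Mcomb : Memℓp (flowZ d h t (fun m => XW h j m * f m)
        - (fun n : Fin d → ℤ => (Complex.I * (t:ℂ) / (h:ℂ)) *
            ((fun n : Fin d → ℤ => flowZ d h t f (upd j 1 n)) n
              - (fun n : Fin d → ℤ => flowZ d h t f (upd j (-1) n)) n))) 2 :=
      M1.sub ((Mup.sub Mdn).const_mul _)
    have hpt : (fun n : Fin d → ℤ => XW h j n * flowZ d h t f n)
        = (flowZ d h t (fun m => XW h j m * f m)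
          - fun n : Fin d → ℤ => (Complex.I * (t:ℂ) / (h:ℂ)) *
            ((fun n : Fin d → ℤ => flowZ d h t f (upd j 1 n)) n
              - (fun n : Fin d → ℤ => flowZ d h t f (upd j (-1) n)) n)) := by
      funext n
      have hc := flow_comm h hh0 t j hf hxf' n
      show XW h j n * flowZ d h t f n
          = flowZ d h t (fun m => XW h j m * f m) n
            - (Complex.I * (t:ℂ) / (h:ℂ)) *
              (flowZ d h t f (upd j 1 n) - flowZ d h t f (upd j (-1) n))
      linear_combination -hc
    have := (memℓp_two_iff _).mp (hpt ▸ Mcomb)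
    exact this
  · intro n
    have hc := flow_comm h hh0 t j hf hxf' n
    show XW h j n * flowZ d h t f n - flowZ d h t (fun m => XW h j m * f m) n
        = (-2 : ℂ) * Complex.I * (t : ℂ) *
          ((flowZ d h t f (upd j 1 n) - flowZ d h t f (upd j (-1) n)) / (2 * (h : ℂ)))
    rw [hc]
    field_simp
    ring

end DNLS
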